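/- Let Y be an Esakia space and X a dense subspace with induced order such that ↑_X x is dense in ↑_Y x for every x ∈ X. Then Y is an N-order-compactification of X: the order ≤_Y is the closure in Y × Y of the order ≤_X (viewed as a subset of Y × Y). -/
import Mathlib


/-- Let `Y` be an Esakia space and `X` a dense subset such that `↑_X x` is dense in
`↑_Y x` for every `x ∈ X`. Then `Y` is an N-order-compactification of `X`: the
order of `Y` is the closure in `Y × Y` of the restricted order of `X`. -/
theorem esakia_compactification_is_N_order_compactification
    {Y : Type*} [TopologicalSpace Y] [PartialOrder Y] [CompactSpace Y] [T2Space Y]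
    (hzd : TopologicalSpace.IsTopologicalBasis {s : Set Y | IsClopen s})
    (hpries : ∀ x y : Y, ¬ x ≤ y →
      ∃ U : Set Y, IsClopen U ∧ IsUpperSet U ∧ x ∈ U ∧ y ∉ U)
    (hdown : ∀ V : Set Y, IsOpen V → IsOpen {y : Y | ∃ v ∈ V, y ≤ v})
    (X : Set Y) (hdense : Dense X)
    (hupdense : ∀ x ∈ X, Set.Ici x ⊆ closure (Set.Ici x ∩ X)) :
    {p : Y × Y | p.1 ≤ p.2} =
      closure {p : Y × Y | p.1 ∈ X ∧ p.2 ∈ X ∧ p.1 ≤ p.2} := by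
  apply Set.Subset.antisymm
  · rintro ⟨x, y⟩ (hp : x ≤ y)
    rw [mem_closure_iff]
    intro O hO hpO
    obtain ⟨U, V, hU, hV, hxU, hyV, hUV⟩ := isOpen_prod_iff.mp hO x y hpO
    have hopen : IsOpen (U ∩ {z : Y | ∃ v ∈ V, z ≤ v}) := hU.inter (hdown V hV)
    have hne : (U ∩ {z : Y | ∃ v ∈ V, z ≤ v}).Nonempty := ⟨x, hxU, y, hyV, hp⟩
    obtain ⟨a, ⟨haU, v, hvV, hav⟩, haX⟩ :=
      hdense.inter_open_nonempty _ hopen hne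
    have hv : v ∈ closure (Set.Ici a ∩ X) := hupdense a haX hav
    obtain ⟨b, hbV, hab, hbX⟩ := mem_closure_iff.mp hv V hV hvV
    exact ⟨(a, b), hUV ⟨haU, hbV⟩, haX, hbX, hab⟩
  · apply closure_minimal
    · rintro ⟨a, b⟩ ⟨_, _, h⟩
      exact h
    · rw [← isOpen_compl_iff, isOpen_prod_iff]
      intro x y hxy
      obtain ⟨U, hUc, hUup, hxU, hyU⟩ := hpries x y hxy
      exact ⟨U, Uᶜ, hUc.isOpen, hUc.isClosed.isOpen_compl, hxU, hyU,
        fun p hp hle => hp.2 (hUup hle hp.1)⟩
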